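/- For every integer j ≥ 1 there exists a tree T on n = 3·2^j vertices with bandwidth at most 2 such that the BFS layering from some vertex has a layer of size at least j + 2; hence bfsw(T) ≥ log₂(n/3) + 2 while bw(T) ≤ 2. -/

import Mathlib

open SimpleGraph

/-- Number of vertices at distance exactly `i` from `v`. -/
noncomputable def layerCard {V : Type*} (G : SimpleGraph V) (v : V) (i : ℕ) : ℕ :=
  ({u : V | G.dist v u = i}).ncard

/-- BFS width of `G` from root `v`: the maximum layer size. -/
noncomputable def bfswFrom {V : Type*} (G : SimpleGraph V) (v : V) : ℕ :=
  sSup (Set.range (layerCard G v))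

/-- BFS width of `G`: maximum over roots. -/
noncomputable def bfsw {V : Type*} (G : SimpleGraph V) : ℕ :=
  sSup (Set.range (bfswFrom G))

/-- Minimum BFS width of `G`: minimum over roots. -/
noncomputable def bfswMin {V : Type*} (G : SimpleGraph V) : ℕ :=
  sInf (Set.range (bfswFrom G))

/-- Bandwidth of `G`: least `b` such that some linear layout has all edges of length `≤ b`. -/
noncomputable def bw {V : Type*} [Fintype V] (G : SimpleGraph V) : ℕ :=
  sInf { b : ℕ | ∃ f : V ≃ Fin (Fintype.card V),
    ∀ u w : V, G.Adj u w → ((f u : ℤ) - (f w : ℤ)).natAbs ≤ b }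

namespace LevelTwoTree

open SimpleGraph

variable {V : Type*} [DecidableEq V]

/-- The graph induced by a parent function. -/
def pGraph (parent : V → V) : SimpleGraph V where
  Adj a b := a ≠ b ∧ (parent a = b ∨ parent b = a)
  symm := by
    constructor
    intro a b hab
    exact ⟨hab.1.symm, hab.2.symm⟩
  loopless := by
    constructor
    intro a ha
    exact ha.1 rfl

/-- A valid rooted-forest specification. -/
structure Spec (parent : V → V) (root : V) (depth : V → ℕ) : Prop where
  hroot : parent root = root
  hd0 : depth root = 0
  hstep : ∀ v, v ≠ root → depth v = depth (parent v) + 1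

variable {parent : V → V} {root : V} {depth : V → ℕ}

lemma Spec.adj_depth (hs : Spec parent root depth) {a b : V}
    (h : (pGraph parent).Adj a b) : depth a = depth b + 1 ∨ depth b = depth a + 1 := by
  obtain ⟨hne, hp | hp⟩ := h
  · left
    have ha : a ≠ root := by
      rintro rfl
      exact hne (hp ▸ hs.hroot).symm
    rw [← hp]; exact hs.hstep a ha
  · right
    have hb : b ≠ root := by
      rintro rfl
      exact hne (hp ▸ hs.hroot)
    rw [← hp]; exact hs.hstep b hb

lemma Spec.parent_eq_of_adj (hs : Spec parent root depth) {a b : V}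
    (h : (pGraph parent).Adj a b) (hd : depth b ≤ depth a) : parent a = b := by
  obtain ⟨hne, hp | hp⟩ := h
  · exact hp
  · exfalso
    have hb : b ≠ root := by
      rintro rfl
      exact hne (hp ▸ hs.hroot)
    have := hs.hstep b hb
    rw [hp] at this
    omega

lemma Spec.reach (hs : Spec parent root depth) (v : V) :
    (pGraph parent).Reachable v root := by
  have key : ∀ n v, depth v = n → (pGraph parent).Reachable v root := by
    intro n
    induction n using Nat.strong_induction_on with
    | _ n ih =>
      intro v hv
      by_cases hvr : v = root
      · exact hvr ▸ Reachable.refl v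
      · have hstep := hs.hstep v hvr
        have hne : v ≠ parent v := by
          intro hvp
          rw [← hvp] at hstep; omega
        have hadj : (pGraph parent).Adj v (parent v) := ⟨hne, Or.inl rfl⟩
        have : depth (parent v) < n := by omega
        exact hadj.reachable.trans (ih _ this (parent v) rfl)
  exact key _ v rfl

lemma Spec.exists_walk (hs : Spec parent root depth) (v : V) :
    ∃ w : (pGraph parent).Walk v root, w.length = depth v := by
  have key : ∀ n v, depth v = n → ∃ w : (pGraph parent).Walk v root, w.length = depth v := by
    intro n
    induction n using Nat.strong_induction_on with
    | _ n ih =>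
      intro v hv
      by_cases hvr : v = root
      · subst hvr
        exact ⟨Walk.nil, by simp [hs.hd0]⟩
      · have hstep := hs.hstep v hvr
        have hne : v ≠ parent v := by
          intro hvp
          rw [← hvp] at hstep; omega
        have hadj : (pGraph parent).Adj v (parent v) := ⟨hne, Or.inl rfl⟩
        have hlt : depth (parent v) < n := by omega
        obtain ⟨w, hw⟩ := ih _ hlt (parent v) rfl
        exact ⟨Walk.cons hadj w, by simp [hw]; omega⟩
  exact key _ v rfl

lemma Spec.depth_le_length (hs : Spec parent root depth) {u v : V}
    (w : (pGraph parent).Walk u v) : depth v ≤ depth u + w.length := by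
  induction w with
  | nil => simp
  | cons h p ih =>
    have := hs.adj_depth h
    simp only [Walk.length_cons]
    omega

lemma Spec.dist_eq (hs : Spec parent root depth) (v : V) :
    (pGraph parent).dist root v = depth v := by
  have hle : (pGraph parent).dist root v ≤ depth v := by
    obtain ⟨w, hw⟩ := hs.exists_walk v
    rw [SimpleGraph.dist_comm]
    exact hw ▸ SimpleGraph.dist_le w
  have hge : depth v ≤ (pGraph parent).dist root v := by
    obtain ⟨w, hw⟩ := ((hs.reach v).symm).exists_walk_length_eq_dist
    have := hs.depth_le_length w
    rw [hs.hd0] at this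
    omega
  omega

lemma Spec.connected (hs : Spec parent root depth) : (pGraph parent).Connected :=
  have : Nonempty V := ⟨root⟩
  ⟨fun a b => (hs.reach a).trans (hs.reach b).symm⟩

lemma Spec.isAcyclic (hs : Spec parent root depth) : (pGraph parent).IsAcyclic := by
  classical
  intro v c hc
  obtain ⟨u, hu', hmax'⟩ := Finset.exists_max_image c.support.toFinset depth
    ⟨v, by simp [c.start_mem_support]⟩
  have hu : u ∈ c.support := List.mem_toFinset.mp hu'
  have hmax : ∀ x ∈ c.support, depth x ≤ depth u := fun x hx =>
    hmax' x (List.mem_toFinset.mpr hx)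
  have hc' : (c.rotate u hu).IsCycle := hc.rotate hu
  have hmem : ∀ x, x ∈ (c.rotate u hu).support → x ∈ c.support := by
    intro x hx
    have hperm := (SimpleGraph.Walk.support_rotate c u hu).perm
    rw [SimpleGraph.Walk.support_eq_cons (c.rotate u hu)] at hx
    rcases List.mem_cons.mp hx with rfl | hx
    · exact hu
    · have : x ∈ c.support.tail := hperm.mem_iff.mp hx
      rw [SimpleGraph.Walk.support_eq_cons c]
      exact List.mem_cons_of_mem _ this
  -- decompose the rotated cycle
  obtain ⟨w, h1, r, hcons⟩ := SimpleGraph.Walk.not_nil_iff.mp hc'.not_nil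
  have hrlen : 0 < r.length := by
    have h3 := hc'.three_le_length
    rw [hcons] at h3
    simp only [Walk.length_cons] at h3
    omega
  have hrnotnil : ¬ r.Nil := SimpleGraph.Walk.not_nil_iff_lt_length.mpr hrlen
  obtain ⟨w', h', p, hr⟩ := SimpleGraph.Walk.not_nil_iff.mp hrnotnil
  obtain ⟨x, q, h2, hconc⟩ := SimpleGraph.Walk.exists_cons_eq_concat h' p
  rw [← hr] at hconc
  -- edges are nodup
  have hnodup := hc'.edges_nodup
  rw [hcons, SimpleGraph.Walk.edges_cons, hconc, SimpleGraph.Walk.edges_concat,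
    List.concat_eq_append, List.nodup_cons] at hnodup
  have hne_edge : s(u, w) ≠ s(x, u) := by
    intro heq
    exact hnodup.1 (heq ▸ List.mem_append_right _ (List.mem_singleton_self _))
  -- membership of w and x in the support
  have hwmem : w ∈ c.support := by
    apply hmem
    rw [hcons, SimpleGraph.Walk.support_cons]
    exact List.mem_cons_of_mem _ r.start_mem_support
  have hxmem : x ∈ c.support := by
    apply hmem
    rw [hcons, SimpleGraph.Walk.support_cons]
    refine List.mem_cons_of_mem _ ?_
    rw [hconc, SimpleGraph.Walk.support_concat]
    exact List.mem_append_left _ q.end_mem_support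
  -- both w and x are the parent of u
  have hpw : parent u = w := hs.parent_eq_of_adj h1 (hmax w hwmem)
  have hpx : parent u = x := hs.parent_eq_of_adj h2.symm (hmax x hxmem)
  apply hne_edge
  rw [← hpw, ← hpx, Sym2.eq_swap]

lemma Spec.isTree (hs : Spec parent root depth) : (pGraph parent).IsTree :=
  ⟨hs.connected, hs.isAcyclic⟩

/-! ### The concrete level-2 tree on `Fin (3 * 2^j)` -/

/-- parent function on positions. -/
def par (h p : ℕ) : ℕ :=
  if p = 0 then 1
  else if p < 2*h-1 then
    (if p % 2 = 1 then p + 2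
     else if 2^(Nat.log 2 p) = p then p - 1 else p - 2)
  else if p = 2*h-1 then p else p - 1

/-- depth function on positions. -/
def dep (h p : ℕ) : ℕ :=
  if p = 0 then h
  else if p ≤ 2*h-1 then
    (if p % 2 = 1 then h - (p+1)/2
     else h + p/2 + 1 - 2^(Nat.log 2 p))
  else p - (2*h-1)

lemma par_lt {h p : ℕ} (hh : 2 ≤ h) (hp : p < 3*h) : par h p < 3*h := by
  unfold par
  split_ifs <;> omega

lemma par_near {h p : ℕ} : par h p ≤ p + 2 ∧ p ≤ par h p + 2 := by
  unfold par
  split_ifs <;> omega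

lemma par_root {h : ℕ} (hh : 1 ≤ h) : par h (2*h-1) = 2*h-1 := by
  unfold par
  split_ifs <;> omega

lemma dep_root {h : ℕ} (hh : 1 ≤ h) : dep h (2*h-1) = 0 := by
  unfold dep
  have h1 : ¬ (2*h-1 = 0) := by omega
  have h2 : (2*h-1) ≤ 2*h-1 := le_refl _
  have h3 : (2*h-1) % 2 = 1 := by omega
  rw [if_neg h1, if_pos h2, if_pos h3]
  omega

lemma two_pow_log_le {p : ℕ} (hp : p ≠ 0) : 2 ^ Nat.log 2 p ≤ p :=
  Nat.pow_log_le_self 2 hp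

lemma lt_two_pow_log_succ (p : ℕ) : p < 2 ^ (Nat.log 2 p + 1) :=
  Nat.lt_pow_succ_log_self (by norm_num) p

lemma dep_step {h p : ℕ} (hh : 2 ≤ h) (hp : p < 3*h) (hne : p ≠ 2*h-1) :
    dep h p = dep h (par h p) + 1 := by
  by_cases h0 : p = 0
  · subst h0
    have hpar : par h 0 = 1 := by unfold par; simp
    have hd0 : dep h 0 = h := by unfold dep; simp
    have hd1 : dep h 1 = h - 1 := by
      unfold dep
      have : ¬ (1 = 0) := one_ne_zero
      rw [if_neg this, if_pos (by omega : 1 ≤ 2*h-1), if_pos (by norm_num : 1 % 2 = 1)]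
    rw [hpar, hd0, hd1]; omega
  by_cases hlt : p < 2*h-1
  · by_cases hodd : p % 2 = 1
    · -- odd spine vertex, parent is p + 2
      have hpar : par h p = p + 2 := by
        unfold par; rw [if_neg h0, if_pos hlt, if_pos hodd]
      have hd : dep h p = h - (p+1)/2 := by
        unfold dep; rw [if_neg h0, if_pos (by omega), if_pos hodd]
      have hd2 : dep h (p+2) = h - (p+3)/2 := by
        unfold dep
        rw [if_neg (by omega : ¬ (p+2 = 0)), if_pos (by omega : p+2 ≤ 2*h-1),
          if_pos (by omega : (p+2) % 2 = 1)]
      rw [hpar, hd, hd2]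
      omega
    · -- even pendant vertex
      have hpe : p % 2 = 0 := by omega
      have hp2 : 2 ≤ p := by omega
      set e := Nat.log 2 p with he
      have hL1 : 2^e ≤ p := two_pow_log_le h0
      have hL2 : p < 2^(e+1) := lt_two_pow_log_succ p
      have he1 : 1 ≤ e := by
        rcases Nat.eq_zero_or_pos e with h' | h'
        · rw [h'] at hL2; simp at hL2; omega
        · exact h'
      have hLeven : 2^e % 2 = 0 := by
        have : 2^e = 2 * 2^(e-1) := by
          rw [← pow_succ']
          congr 1
          omega
        omega
      have hpow2 : 2^(e+1) = 2 * 2^e := by rw [pow_succ]; ring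
      by_cases hpow : 2^e = p
      · -- p is a power of two: first pendant vertex, parent is p - 1 (spine)
        have hpar : par h p = p - 1 := by
          unfold par; rw [if_neg h0, if_pos hlt, if_neg (by omega), if_pos (he ▸ hpow)]
        have hd : dep h p = h + p/2 + 1 - p := by
          unfold dep
          rw [if_neg h0, if_pos (by omega), if_neg (by omega), ← he, hpow]
        have hd2 : dep h (p-1) = h - p/2 := by
          unfold dep
          rw [if_neg (by omega : ¬ (p-1 = 0)), if_pos (by omega : p-1 ≤ 2*h-1),
            if_pos (by omega : (p-1) % 2 = 1)]
          omega
        rw [hpar, hd, hd2]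
        omega
      · -- p not a power of two: parent is p - 2 (previous pendant vertex)
        have hLlt : 2^e ≤ p - 2 := by omega
        have hlog2 : Nat.log 2 (p-2) = e :=
          Nat.log_eq_of_pow_le_of_lt_pow hLlt (by omega)
        have hp4 : 4 ≤ p := by
          have : 2 ≤ 2^e := by
            calc 2 = 2^1 := (pow_one 2).symm
            _ ≤ 2^e := Nat.pow_le_pow_right (by norm_num) he1
          omega
        have hpar : par h p = p - 2 := by
          unfold par; rw [if_neg h0, if_pos hlt, if_neg (by omega), if_neg (he ▸ hpow)]
        have hd : dep h p = h + p/2 + 1 - 2^e := by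
          unfold dep
          rw [if_neg h0, if_pos (by omega), if_neg (by omega), ← he]
        have hd2 : dep h (p-2) = h + (p-2)/2 + 1 - 2^e := by
          unfold dep
          rw [if_neg (by omega : ¬ (p-2 = 0)), if_pos (by omega : p-2 ≤ 2*h-1),
            if_neg (by omega : ¬ ((p-2) % 2 = 1)), hlog2]
        rw [hpar, hd, hd2]
        omega
  · -- tail path: p > 2h - 1, parent is p - 1
    have hgt : 2*h-1 < p := by omega
    have hpar : par h p = p - 1 := by
      unfold par; rw [if_neg h0, if_neg (by omega), if_neg hne]
    have hd : dep h p = p - (2*h-1) := by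
      unfold dep; rw [if_neg h0, if_neg (by omega)]
    by_cases hp1 : p - 1 = 2*h-1
    · rw [hpar, hd, hp1, dep_root (by omega)]
      omega
    · have hd2 : dep h (p-1) = p - 1 - (2*h-1) := by
        unfold dep; rw [if_neg (by omega : ¬ (p-1 = 0)), if_neg (by omega)]
      rw [hpar, hd, hd2]
      omega

lemma dep_zero {h : ℕ} (hh : 1 ≤ h) : dep h 0 = h := by unfold dep; simp

lemma dep_last {h : ℕ} (hh : 1 ≤ h) : dep h (3*h-1) = h := by
  unfold dep
  rw [if_neg (by omega : ¬ (3*h-1 = 0)), if_neg (by omega : ¬ (3*h-1 ≤ 2*h-1))]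
  omega

lemma dep_pendant_end {j i : ℕ} (hij : i < j) :
    dep (2^j) (2^(i+2)-2) = 2^j := by
  have hA : 2 ≤ 2^(i+1) := by
    calc 2 = 2^1 := (pow_one 2).symm
    _ ≤ 2^(i+1) := Nat.pow_le_pow_right (by norm_num) (by omega)
  have hA2 : 2^(i+2) = 2 * 2^(i+1) := by rw [pow_succ]; ring
  have hhle : 2^(i+2) ≤ 2 * 2^j := by
    calc 2^(i+2) ≤ 2^(j+1) := Nat.pow_le_pow_right (by norm_num) (by omega)
    _ = 2 * 2^j := by rw [pow_succ]; ring
  have hh1 : 1 ≤ 2^j := Nat.one_le_two_pow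
  have hlog : Nat.log 2 (2^(i+2)-2) = i+1 :=
    Nat.log_eq_of_pow_le_of_lt_pow (by omega) (by omega)
  unfold dep
  rw [if_neg (by omega : ¬ (2^(i+2)-2 = 0)), if_pos (by omega),
    if_neg (by omega : ¬ ((2^(i+2)-2) % 2 = 1)), hlog]
  omega

end LevelTwoTree

theorem exists_tree_bw_two_bfsw_log (j : ℕ) (hj : 1 ≤ j) :
    ∃ (n : ℕ) (T : SimpleGraph (Fin n)),
      n = 3 * 2 ^ j ∧ T.IsTree ∧ bw T ≤ 2 ∧
      ∃ (v : Fin n) (i : ℕ), j + 2 ≤ layerCard T v i := by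
  classical
  have hh2 : 2 ≤ 2^j := by
    calc 2 = 2^1 := (pow_one 2).symm
    _ ≤ 2^j := Nat.pow_le_pow_right (by norm_num) hj
  set h : ℕ := 2^j with hhdef
  set n : ℕ := 3 * h with hndef
  have hnpos : 0 < n := by omega
  let parent : Fin n → Fin n := fun p => ⟨LevelTwoTree.par h p.val, LevelTwoTree.par_lt hh2 p.isLt⟩
  let root : Fin n := ⟨2*h-1, by omega⟩
  let depth : Fin n → ℕ := fun p => LevelTwoTree.dep h p.val
  have hspec : LevelTwoTree.Spec parent root depth := by
    refine ⟨?_, ?_, ?_⟩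
    · apply Fin.ext
      exact LevelTwoTree.par_root (by omega)
    · exact LevelTwoTree.dep_root (by omega)
    · intro v hv
      have hvne : (v : ℕ) ≠ 2*h-1 := fun hc => hv (Fin.ext hc)
      exact LevelTwoTree.dep_step hh2 v.isLt hvne
  refine ⟨n, LevelTwoTree.pGraph parent, rfl, hspec.isTree, ?_, ?_⟩
  · -- bandwidth at most 2
    apply Nat.sInf_le
    refine ⟨finCongr (Fintype.card_fin n).symm, ?_⟩
    intro u w hadj
    obtain ⟨hne, hp | hp⟩ := hadj
    · have hval : (w : ℕ) = LevelTwoTree.par h u.val := (congrArg Fin.val hp).symm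
      have h1 := @LevelTwoTree.par_near h u.val
      simp only [finCongr_apply, Fin.coe_cast]
      omega
    · have hval : (u : ℕ) = LevelTwoTree.par h w.val := (congrArg Fin.val hp).symm
      have h1 := @LevelTwoTree.par_near h w.val
      simp only [finCongr_apply, Fin.coe_cast]
      omega
  · -- a large BFS layer
    refine ⟨root, h, ?_⟩
    have hdist : ∀ u : Fin n, (LevelTwoTree.pGraph parent).dist root u = depth u := hspec.dist_eq
    let g : ℕ → Fin n := fun i => ⟨(2^(i+2)-2) % n, Nat.mod_lt _ hnpos⟩
    let v0 : Fin n := ⟨0, hnpos⟩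
    let v1 : Fin n := ⟨3*h-1, by omega⟩
    have hpowlt : ∀ i, i < j → 2^(i+2)-2 < n ∧ 2 ≤ 2^(i+2)-2 ∧ 2^(i+2)-2 ≤ 2*h-2 := by
      intro i hi
      have h4 : 4 ≤ 2^(i+2) := by
        calc 4 = 2^2 := by norm_num
        _ ≤ 2^(i+2) := Nat.pow_le_pow_right (by norm_num) (by omega)
      have hle : 2^(i+2) ≤ 2*h := by
        rw [hhdef]
        calc 2^(i+2) ≤ 2^(j+1) := Nat.pow_le_pow_right (by norm_num) (by omega)
        _ = 2 * 2^j := by rw [pow_succ]; ring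
      omega
    have hgval : ∀ i, i < j → ((g i : Fin n) : ℕ) = 2^(i+2)-2 := by
      intro i hi
      exact Nat.mod_eq_of_lt (hpowlt i hi).1
    let S : Finset (Fin n) := insert v0 (insert v1 ((Finset.range j).image g))
    have himg : ((Finset.range j).image g).card = j := by
      rw [Finset.card_image_of_injOn, Finset.card_range]
      intro a ha b hb hab
      have hav := congrArg Fin.val hab
      rw [hgval a (Finset.mem_range.mp ha), hgval b (Finset.mem_range.mp hb)] at hav
      have h4a : 4 ≤ 2^(a+2) := by
        calc 4 = 2^2 := by norm_num
        _ ≤ 2^(a+2) := Nat.pow_le_pow_right (by norm_num) (by omega)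
      have h4b : 4 ≤ 2^(b+2) := by
        calc 4 = 2^2 := by norm_num
        _ ≤ 2^(b+2) := Nat.pow_le_pow_right (by norm_num) (by omega)
      have hpow : 2^(a+2) = 2^(b+2) := by omega
      have := Nat.pow_right_injective (le_refl 2) hpow
      omega
    have hv1img : v1 ∉ (Finset.range j).image g := by
      intro hmem
      obtain ⟨i, hi, hgi⟩ := Finset.mem_image.mp hmem
      have := congrArg Fin.val hgi
      rw [hgval i (Finset.mem_range.mp hi)] at this
      have := hpowlt i (Finset.mem_range.mp hi)
      simp only [v1] at *
      omega
    have hv0mem : v0 ∉ insert v1 ((Finset.range j).image g) := by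
      intro hmem
      rcases Finset.mem_insert.mp hmem with heq | hmem'
      · have := congrArg Fin.val heq
        simp only [v0, v1] at this
        omega
      · obtain ⟨i, hi, hgi⟩ := Finset.mem_image.mp hmem'
        have := congrArg Fin.val hgi
        rw [hgval i (Finset.mem_range.mp hi)] at this
        have := hpowlt i (Finset.mem_range.mp hi)
        simp only [v0] at *
        omega
    have hScard : S.card = j + 2 := by
      rw [Finset.card_insert_of_notMem hv0mem, Finset.card_insert_of_notMem hv1img, himg]
    have hSsub : ↑S ⊆ {u : Fin n | (LevelTwoTree.pGraph parent).dist root u = h} := by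
      intro u hu
      simp only [S, Finset.coe_insert, Set.mem_insert_iff, Finset.coe_image,
        Set.mem_image, Finset.mem_coe, Finset.mem_range] at hu
      simp only [Set.mem_setOf_eq, hdist]
      rcases hu with rfl | rfl | ⟨i, hi, rfl⟩
      · show LevelTwoTree.dep h (0 : ℕ) = h
        exact LevelTwoTree.dep_zero (by omega)
      · show LevelTwoTree.dep h (3*h-1) = h
        exact LevelTwoTree.dep_last (by omega)
      · show LevelTwoTree.dep h ((g i : Fin n) : ℕ) = h
        rw [hgval i hi, hhdef]
        exact LevelTwoTree.dep_pendant_end hi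
    calc j + 2 = S.card := hScard.symm
    _ = (↑S : Set (Fin n)).ncard := (Set.ncard_coe_finset S).symm
    _ ≤ layerCard (LevelTwoTree.pGraph parent) root h := Set.ncard_le_ncard hSsub (Set.toFinite _)
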